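/- For every n ∈ ℕ and positive reals x_1,...,x_n: (1/n) ∑_{k=1}^n (x_1 x_2 ⋯ x_k)^{1/k} ≤ ∏_{k=1}^n ((x_1+⋯+x_k)/k)^{1/n}. -/

import Mathlib

open Finset

/-- Superadditivity of the geometric mean (Mahler's inequality):
`GM(u) + GM(v) ≤ GM(u+v)` over `Icc 1 N`. -/
private lemma kedlaya_geom_superadd (N : ℕ) (hN : 1 ≤ N) (u v : ℕ → ℝ)
    (hu : ∀ k ∈ Icc 1 N, 0 < u k) (hv : ∀ k ∈ Icc 1 N, 0 ≤ v k) :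
    (∏ k ∈ Icc 1 N, u k ^ ((1 : ℝ) / N)) + ∏ k ∈ Icc 1 N, v k ^ ((1 : ℝ) / N)
      ≤ ∏ k ∈ Icc 1 N, (u k + v k) ^ ((1 : ℝ) / N) := by
  have hNR : (0 : ℝ) < (N : ℝ) := by exact_mod_cast hN
  have hS : ∀ k ∈ Icc 1 N, 0 < u k + v k := fun k hk =>
    add_pos_of_pos_of_nonneg (hu k hk) (hv k hk)
  have hP : 0 < ∏ k ∈ Icc 1 N, (u k + v k) ^ ((1 : ℝ) / N) :=
    Finset.prod_pos fun k hk => Real.rpow_pos_of_pos (hS k hk) _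
  have hw' : ∑ _k ∈ Icc 1 N, (1 : ℝ) / (N : ℝ) = 1 := by
    rw [Finset.sum_const, Nat.card_Icc]
    simp only [Nat.add_sub_cancel, nsmul_eq_mul]
    field_simp
  have key : ∀ f : ℕ → ℝ, (∀ k ∈ Icc 1 N, 0 ≤ f k) →
      (∏ k ∈ Icc 1 N, f k ^ ((1 : ℝ) / N)) / (∏ k ∈ Icc 1 N, (u k + v k) ^ ((1 : ℝ) / N))
        ≤ ∑ k ∈ Icc 1 N, ((1 : ℝ) / N) * (f k / (u k + v k)) := by
    intro f hf
    have h := Real.geom_mean_le_arith_mean_weighted (Icc 1 N) (fun _ => (1 : ℝ) / N)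
      (fun k => f k / (u k + v k)) (fun k _ => by positivity) hw'
      (fun k hk => div_nonneg (hf k hk) (hS k hk).le)
    have heq : (∏ k ∈ Icc 1 N, (f k / (u k + v k)) ^ ((1 : ℝ) / N))
        = (∏ k ∈ Icc 1 N, f k ^ ((1 : ℝ) / N))
          / (∏ k ∈ Icc 1 N, (u k + v k) ^ ((1 : ℝ) / N)) := by
      rw [← Finset.prod_div_distrib]
      exact Finset.prod_congr rfl fun k hk => Real.div_rpow (hf k hk) (hS k hk).le _
    rw [← heq]
    exact h
  have h1 := key u fun k hk => (hu k hk).le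
  have h2 := key v hv
  have hsum : (∑ k ∈ Icc 1 N, ((1 : ℝ) / N) * (u k / (u k + v k)))
      + (∑ k ∈ Icc 1 N, ((1 : ℝ) / N) * (v k / (u k + v k))) = 1 := by
    have hstep : (∑ k ∈ Icc 1 N, ((1 : ℝ) / N) * (u k / (u k + v k)))
        + (∑ k ∈ Icc 1 N, ((1 : ℝ) / N) * (v k / (u k + v k)))
        = ∑ k ∈ Icc 1 N, (1 : ℝ) / N := by
      rw [← Finset.sum_add_distrib]
      refine Finset.sum_congr rfl fun k hk => ?_
      rw [← mul_add, ← add_div, div_self (hS k hk).ne', mul_one]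
    rw [hstep, hw']
  have hfin : ((∏ k ∈ Icc 1 N, u k ^ ((1 : ℝ) / N)) + ∏ k ∈ Icc 1 N, v k ^ ((1 : ℝ) / N))
      / (∏ k ∈ Icc 1 N, (u k + v k) ^ ((1 : ℝ) / N)) ≤ 1 := by
    rw [add_div]
    calc _ ≤ (∑ k ∈ Icc 1 N, ((1 : ℝ) / N) * (u k / (u k + v k)))
        + (∑ k ∈ Icc 1 N, ((1 : ℝ) / N) * (v k / (u k + v k))) := add_le_add h1 h2
      _ = 1 := hsum
  calc (∏ k ∈ Icc 1 N, u k ^ ((1 : ℝ) / N)) + ∏ k ∈ Icc 1 N, v k ^ ((1 : ℝ) / N)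
      = (((∏ k ∈ Icc 1 N, u k ^ ((1 : ℝ) / N)) + ∏ k ∈ Icc 1 N, v k ^ ((1 : ℝ) / N))
        / (∏ k ∈ Icc 1 N, (u k + v k) ^ ((1 : ℝ) / N)))
        * (∏ k ∈ Icc 1 N, (u k + v k) ^ ((1 : ℝ) / N)) := by
        field_simp
    _ ≤ 1 * (∏ k ∈ Icc 1 N, (u k + v k) ^ ((1 : ℝ) / N)) :=
        mul_le_mul_of_nonneg_right hfin hP.le
    _ = _ := one_mul _


private noncomputable def kT (x : ℕ → ℝ) (k : ℕ) : ℝ := ∑ i ∈ Icc 1 k, x i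

private noncomputable def kA (x : ℕ → ℝ) (k : ℕ) : ℝ := kT x k / k

private lemma kT_succ (x : ℕ → ℝ) (j : ℕ) : kT x (j + 1) = kT x j + x (j + 1) :=
  Finset.sum_Icc_succ_top (Nat.le_add_left 1 j) x

private lemma kT_nonneg {x : ℕ → ℝ} {m : ℕ} (hx : ∀ i ∈ Icc 1 m, 0 < x i)
    {k : ℕ} (hk : k ≤ m) : 0 ≤ kT x k :=
  Finset.sum_nonneg fun i hi =>
    (hx i (mem_Icc.mpr ⟨(mem_Icc.mp hi).1, le_trans (mem_Icc.mp hi).2 hk⟩)).le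

private lemma kT_pos {x : ℕ → ℝ} {m : ℕ} (hx : ∀ i ∈ Icc 1 m, 0 < x i)
    {k : ℕ} (h1 : 1 ≤ k) (hk : k ≤ m) : 0 < kT x k :=
  Finset.sum_pos (fun i hi =>
      hx i (mem_Icc.mpr ⟨(mem_Icc.mp hi).1, le_trans (mem_Icc.mp hi).2 hk⟩))
    ⟨1, mem_Icc.mpr ⟨le_refl 1, h1⟩⟩

private lemma kA_nonneg {x : ℕ → ℝ} {m : ℕ} (hx : ∀ i ∈ Icc 1 m, 0 < x i)
    {k : ℕ} (hk : k ≤ m) : 0 ≤ kA x k :=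
  div_nonneg (kT_nonneg hx hk) (Nat.cast_nonneg k)

private lemma kA_pos {x : ℕ → ℝ} {m : ℕ} (hx : ∀ i ∈ Icc 1 m, 0 < x i)
    {k : ℕ} (h1 : 1 ≤ k) (hk : k ≤ m) : 0 < kA x k := by
  have : (0 : ℝ) < (k : ℝ) := by exact_mod_cast h1
  exact div_pos (kT_pos hx h1 hk) this

private lemma mul_kA (x : ℕ → ℝ) (k : ℕ) : (k : ℝ) * kA x k = kT x k := by
  rcases Nat.eq_zero_or_pos k with rfl | hk
  · simp [kA, kT]
  · have hkR : (k : ℝ) ≠ 0 := by positivity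
    rw [kA]
    field_simp

/-- extracting a nonnegative constant from a product of `rpow`s over `Icc 1 N` -/
private lemma prod_const_mul_rpow (N : ℕ) (hN : 1 ≤ N) (c : ℝ) (hc : 0 ≤ c) (f : ℕ → ℝ)
    (hf : ∀ k ∈ Icc 1 N, 0 ≤ f k) :
    ∏ k ∈ Icc 1 N, (c * f k) ^ ((1 : ℝ) / (N : ℝ))
      = c * ∏ k ∈ Icc 1 N, f k ^ ((1 : ℝ) / (N : ℝ)) := by
  have hNR : (0 : ℝ) < (N : ℝ) := by exact_mod_cast hN
  calc ∏ k ∈ Icc 1 N, (c * f k) ^ ((1 : ℝ) / (N : ℝ))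
      = ∏ k ∈ Icc 1 N, (c ^ ((1 : ℝ) / (N : ℝ)) * f k ^ ((1 : ℝ) / (N : ℝ))) :=
        Finset.prod_congr rfl fun k hk => Real.mul_rpow hc (hf k hk)
    _ = (∏ _k ∈ Icc 1 N, c ^ ((1 : ℝ) / (N : ℝ))) * ∏ k ∈ Icc 1 N, f k ^ ((1 : ℝ) / (N : ℝ)) :=
        Finset.prod_mul_distrib
    _ = c * ∏ k ∈ Icc 1 N, f k ^ ((1 : ℝ) / (N : ℝ)) := by
        rw [Finset.prod_const, Nat.card_Icc, Nat.add_sub_cancel,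
          ← Real.rpow_natCast (c ^ ((1 : ℝ) / (N : ℝ))) N, ← Real.rpow_mul hc,
          one_div_mul_cancel hNR.ne', Real.rpow_one]

/-- The key step: `n·GM_n(A) ≤ GM_{n+1}(v)` where
`v k = (n+1-k)·A k + (k-1)·A (k-1)`. -/
private lemma kedlaya_step (x : ℕ → ℝ) (n : ℕ) (hn : 1 ≤ n)
    (hx : ∀ i ∈ Icc 1 (n + 1), 0 < x i) :
    (n : ℝ) * ∏ k ∈ Icc 1 n, kA x k ^ ((1 : ℝ) / (n : ℝ))
      ≤ ∏ k ∈ Icc 1 (n + 1),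
          (((n : ℝ) + 1 - (k : ℝ)) * kA x k + kT x (k - 1)) ^ ((1 : ℝ) / ((n + 1 : ℕ) : ℝ)) := by
  have hnR : (0 : ℝ) < (n : ℝ) := by exact_mod_cast hn
  have hNR : (0 : ℝ) < ((n + 1 : ℕ) : ℝ) := by positivity
  have hAnn : ∀ k, k ≤ n + 1 → 0 ≤ kA x k := fun k hk => kA_nonneg hx hk
  have hApos : ∀ k, 1 ≤ k → k ≤ n + 1 → 0 < kA x k := fun k h1 h2 => kA_pos hx h1 h2
  set e : ℝ := (1 : ℝ) / ((n + 1 : ℕ) : ℝ) with he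
  -- the per-factor weighted AM-GM
  have hfac : ∀ k ∈ Icc 1 (n + 1),
      (n : ℝ) * (kA x k ^ (((n : ℝ) + 1 - (k : ℝ)) / (n : ℝ))
          * kA x (k - 1) ^ (((k : ℝ) - 1) / (n : ℝ)))
        ≤ ((n : ℝ) + 1 - (k : ℝ)) * kA x k + kT x (k - 1) := by
    intro k hk
    obtain ⟨hk1, hk2⟩ := mem_Icc.mp hk
    have hkR : (1 : ℝ) ≤ (k : ℝ) := by exact_mod_cast hk1
    have hkR2 : (k : ℝ) ≤ (n : ℝ) + 1 := by exact_mod_cast hk2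
    have hw₁ : 0 ≤ ((n : ℝ) + 1 - (k : ℝ)) / (n : ℝ) := div_nonneg (by linarith) hnR.le
    have hw₂ : 0 ≤ ((k : ℝ) - 1) / (n : ℝ) := div_nonneg (by linarith) hnR.le
    have hwsum : ((n : ℝ) + 1 - (k : ℝ)) / (n : ℝ) + ((k : ℝ) - 1) / (n : ℝ) = 1 := by
      field_simp
      ring
    have hgm := Real.geom_mean_le_arith_mean2_weighted hw₁ hw₂ (hAnn k hk2)
      (hAnn (k - 1) (by omega)) hwsum
    have hmul := mul_le_mul_of_nonneg_left hgm hnR.le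
    have hT1 : ((k : ℝ) - 1) * kA x (k - 1) = kT x (k - 1) := by
      have h := mul_kA x (k - 1)
      rwa [Nat.cast_sub hk1, Nat.cast_one] at h
    calc (n : ℝ) * (kA x k ^ (((n : ℝ) + 1 - (k : ℝ)) / (n : ℝ))
          * kA x (k - 1) ^ (((k : ℝ) - 1) / (n : ℝ)))
        ≤ (n : ℝ) * (((n : ℝ) + 1 - (k : ℝ)) / (n : ℝ) * kA x k
            + ((k : ℝ) - 1) / (n : ℝ) * kA x (k - 1)) := hmul
      _ = ((n : ℝ) + 1 - (k : ℝ)) * kA x k + ((k : ℝ) - 1) * kA x (k - 1) := by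
          field_simp
      _ = ((n : ℝ) + 1 - (k : ℝ)) * kA x k + kT x (k - 1) := by rw [hT1]
  have hlhs_nn : ∀ k ∈ Icc 1 (n + 1),
      0 ≤ (n : ℝ) * (kA x k ^ (((n : ℝ) + 1 - (k : ℝ)) / (n : ℝ))
          * kA x (k - 1) ^ (((k : ℝ) - 1) / (n : ℝ))) := by
    intro k hk
    obtain ⟨hk1, hk2⟩ := mem_Icc.mp hk
    have h1 : 0 ≤ kA x k := hAnn k hk2
    have h2 : 0 ≤ kA x (k - 1) := hAnn (k - 1) (by omega)
    positivity
  -- compare products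
  have hprodle : ∏ k ∈ Icc 1 (n + 1),
        ((n : ℝ) * (kA x k ^ (((n : ℝ) + 1 - (k : ℝ)) / (n : ℝ))
          * kA x (k - 1) ^ (((k : ℝ) - 1) / (n : ℝ)))) ^ e
      ≤ ∏ k ∈ Icc 1 (n + 1),
        (((n : ℝ) + 1 - (k : ℝ)) * kA x k + kT x (k - 1)) ^ e :=
    Finset.prod_le_prod (fun k hk => Real.rpow_nonneg (hlhs_nn k hk) _)
      (fun k hk => Real.rpow_le_rpow (hlhs_nn k hk) (hfac k hk) (by positivity))
  refine le_trans (le_of_eq ?_) hprodle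
  -- the identity: LHS product equals n * GM_n(A)
  rw [prod_const_mul_rpow (n + 1) (by omega) (n : ℝ) hnR.le _
    (fun k hk => by
      obtain ⟨hk1, hk2⟩ := mem_Icc.mp hk
      have h1 : 0 ≤ kA x k := hAnn k hk2
      have h2 : 0 ≤ kA x (k - 1) := hAnn (k - 1) (by omega)
      positivity)]
  congr 1
  -- ∏ (A k ^ w₁ * A (k-1) ^ w₂) ^ e = ∏_{Icc 1 n} A k ^ (1/n)
  have hsplit : ∀ k ∈ Icc 1 (n + 1),
      (kA x k ^ (((n : ℝ) + 1 - (k : ℝ)) / (n : ℝ))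
          * kA x (k - 1) ^ (((k : ℝ) - 1) / (n : ℝ))) ^ e
        = kA x k ^ ((((n : ℝ) + 1 - (k : ℝ)) / (n : ℝ)) * e)
          * kA x (k - 1) ^ ((((k : ℝ) - 1) / (n : ℝ)) * e) := by
    intro k hk
    obtain ⟨hk1, hk2⟩ := mem_Icc.mp hk
    rw [Real.mul_rpow (Real.rpow_nonneg (hAnn k hk2) _)
        (Real.rpow_nonneg (hAnn (k - 1) (by omega)) _),
      ← Real.rpow_mul (hAnn k hk2), ← Real.rpow_mul (hAnn (k - 1) (by omega))]
  rw [Finset.prod_congr rfl hsplit, Finset.prod_mul_distrib]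
  -- first product: drop the top factor k = n+1 (exponent 0)
  have hP1 : ∏ k ∈ Icc 1 (n + 1), kA x k ^ ((((n : ℝ) + 1 - (k : ℝ)) / (n : ℝ)) * e)
      = ∏ k ∈ Icc 1 n, kA x k ^ ((((n : ℝ) + 1 - (k : ℝ)) / (n : ℝ)) * e) := by
    rw [Finset.prod_Icc_succ_top (Nat.le_add_left 1 n)]
    rw [show ((((n : ℝ) + 1 - ((n + 1 : ℕ) : ℝ)) / (n : ℝ)) * e) = 0 by push_cast; ring]
    rw [Real.rpow_zero, mul_one]
  -- second product: reindex k ↦ k+1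
  have hP2 : ∏ k ∈ Icc 1 (n + 1), kA x (k - 1) ^ ((((k : ℝ) - 1) / (n : ℝ)) * e)
      = ∏ k ∈ Icc 1 n, kA x k ^ (((k : ℝ) / (n : ℝ)) * e) := by
    have hmap : Icc 1 (n + 1) = (Icc 0 n).map (addRightEmbedding 1) := by
      rw [map_add_right_Icc, zero_add]
    rw [hmap, Finset.prod_map]
    have : ∀ j ∈ Icc 0 n,
        kA x ((addRightEmbedding 1) j - 1)
            ^ (((((addRightEmbedding 1) j : ℕ) : ℝ) - 1) / (n : ℝ) * e)
          = kA x j ^ (((j : ℝ) / (n : ℝ)) * e) := by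
      intro j hj
      simp only [addRightEmbedding_apply, Nat.add_sub_cancel]
      congr 1
      push_cast
      ring
    rw [Finset.prod_congr rfl this]
    rw [Finset.Icc_eq_cons_Ioc (Nat.zero_le n), Finset.prod_cons]
    rw [show (((0 : ℕ) : ℝ) / (n : ℝ)) * e = 0 by push_cast; ring]
    rw [Real.rpow_zero, one_mul, ← Finset.Icc_add_one_left_eq_Ioc, zero_add]
  rw [hP1, hP2, ← Finset.prod_mul_distrib]
  refine Finset.prod_congr rfl fun k hk => ?_
  obtain ⟨hk1, hk2⟩ := mem_Icc.mp hk
  rw [← Real.rpow_add (hApos k hk1 (by omega))]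
  congr 1
  rw [he]
  push_cast
  field_simp
  ring

private lemma kedlaya_aux (x : ℕ → ℝ) :
    ∀ n : ℕ, (∀ i ∈ Icc 1 n, 0 < x i) →
    ∑ k ∈ Icc 1 n, (∏ i ∈ Icc 1 k, x i) ^ ((1 : ℝ) / k)
      ≤ (n : ℝ) * ∏ k ∈ Icc 1 n, ((∑ i ∈ Icc 1 k, x i) / k) ^ ((1 : ℝ) / n) := by
  intro n
  induction n with
  | zero => intro _; simp
  | succ n ih =>
    intro hx
    rcases Nat.eq_zero_or_pos n with rfl | hn
    · simp [Real.rpow_one]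
    have hx' : ∀ i ∈ Icc 1 n, 0 < x i := fun i hi =>
      hx i (mem_Icc.mpr ⟨(mem_Icc.mp hi).1, le_trans (mem_Icc.mp hi).2 (Nat.le_succ n)⟩)
    have ihn : ∑ k ∈ Icc 1 n, (∏ i ∈ Icc 1 k, x i) ^ ((1 : ℝ) / k)
        ≤ (n : ℝ) * ∏ k ∈ Icc 1 n, kA x k ^ ((1 : ℝ) / (n : ℝ)) := ih hx'
    have hAnn : ∀ k, k ≤ n + 1 → 0 ≤ kA x k := fun k hk => kA_nonneg hx hk
    have hvnn : ∀ k ∈ Icc 1 (n + 1),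
        0 ≤ ((n : ℝ) + 1 - (k : ℝ)) * kA x k + kT x (k - 1) := by
      intro k hk
      obtain ⟨hk1, hk2⟩ := mem_Icc.mp hk
      have hkR2 : (k : ℝ) ≤ (n : ℝ) + 1 := by exact_mod_cast hk2
      have h1 := hAnn k hk2
      have h2 := kT_nonneg hx (show k - 1 ≤ n + 1 by omega)
      have h3 : 0 ≤ ((n : ℝ) + 1 - (k : ℝ)) * kA x k := mul_nonneg (by linarith) h1
      linarith
    have hsup := kedlaya_geom_superadd (n + 1) (Nat.le_add_left 1 n) x
      (fun k => ((n : ℝ) + 1 - (k : ℝ)) * kA x k + kT x (k - 1)) hx hvnn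
    have hstep := kedlaya_step x n hn hx
    have hGN : (∏ i ∈ Icc 1 (n + 1), x i) ^ ((1 : ℝ) / ((n + 1 : ℕ) : ℝ))
        = ∏ k ∈ Icc 1 (n + 1), x k ^ ((1 : ℝ) / ((n + 1 : ℕ) : ℝ)) :=
      (Real.finset_prod_rpow _ _ (fun i hi => (hx i hi).le) _).symm
    have hxv : ∀ k ∈ Icc 1 (n + 1),
        x k + (((n : ℝ) + 1 - (k : ℝ)) * kA x k + kT x (k - 1))
          = ((n + 1 : ℕ) : ℝ) * kA x k := by
      intro k hk
      obtain ⟨hk1, hk2⟩ := mem_Icc.mp hk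
      cases k with
      | zero => omega
      | succ j =>
        simp only [Nat.add_sub_cancel, kA]
        rw [kT_succ x j]
        have hj : ((j : ℝ) + 1) ≠ 0 := by positivity
        push_cast
        field_simp
        ring
    calc ∑ k ∈ Icc 1 (n + 1), (∏ i ∈ Icc 1 k, x i) ^ ((1 : ℝ) / k)
        = (∑ k ∈ Icc 1 n, (∏ i ∈ Icc 1 k, x i) ^ ((1 : ℝ) / k))
          + (∏ i ∈ Icc 1 (n + 1), x i) ^ ((1 : ℝ) / ((n + 1 : ℕ) : ℝ)) :=
          Finset.sum_Icc_succ_top (Nat.le_add_left 1 n) _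
      _ ≤ ((n : ℝ) * ∏ k ∈ Icc 1 n, kA x k ^ ((1 : ℝ) / (n : ℝ)))
          + (∏ i ∈ Icc 1 (n + 1), x i) ^ ((1 : ℝ) / ((n + 1 : ℕ) : ℝ)) :=
          add_le_add_left ihn _
      _ ≤ (∏ k ∈ Icc 1 (n + 1),
            (((n : ℝ) + 1 - (k : ℝ)) * kA x k + kT x (k - 1)) ^ ((1 : ℝ) / ((n + 1 : ℕ) : ℝ)))
          + ∏ k ∈ Icc 1 (n + 1), x k ^ ((1 : ℝ) / ((n + 1 : ℕ) : ℝ)) := by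
          rw [hGN]
          exact add_le_add_left hstep _
      _ = (∏ k ∈ Icc 1 (n + 1), x k ^ ((1 : ℝ) / ((n + 1 : ℕ) : ℝ)))
          + ∏ k ∈ Icc 1 (n + 1),
            (((n : ℝ) + 1 - (k : ℝ)) * kA x k + kT x (k - 1)) ^ ((1 : ℝ) / ((n + 1 : ℕ) : ℝ)) :=
          add_comm _ _
      _ ≤ ∏ k ∈ Icc 1 (n + 1),
            (x k + (((n : ℝ) + 1 - (k : ℝ)) * kA x k + kT x (k - 1)))
              ^ ((1 : ℝ) / ((n + 1 : ℕ) : ℝ)) := hsup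
      _ = ∏ k ∈ Icc 1 (n + 1), (((n + 1 : ℕ) : ℝ) * kA x k) ^ ((1 : ℝ) / ((n + 1 : ℕ) : ℝ)) :=
          Finset.prod_congr rfl fun k hk => by rw [hxv k hk]
      _ = ((n + 1 : ℕ) : ℝ) * ∏ k ∈ Icc 1 (n + 1), kA x k ^ ((1 : ℝ) / ((n + 1 : ℕ) : ℝ)) :=
          prod_const_mul_rpow (n + 1) (Nat.le_add_left 1 n) _ (by positivity) _
            (fun k hk => hAnn k (mem_Icc.mp hk).2)

/-- The unweighted Kedlaya inequality: the arithmetic mean of the partial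
geometric means is at most the geometric mean of the partial arithmetic means. -/
theorem kedlaya_inequality
    (n : ℕ) (hn : 1 ≤ n) (x : ℕ → ℝ) (hx : ∀ i ∈ Icc 1 n, 0 < x i) :
    (1 / (n : ℝ)) * ∑ k ∈ Icc 1 n, (∏ i ∈ Icc 1 k, x i) ^ ((1 : ℝ) / k)
      ≤ ∏ k ∈ Icc 1 n, ((∑ i ∈ Icc 1 k, x i) / k) ^ ((1 : ℝ) / n) := by
  have hNR : (0 : ℝ) < (n : ℝ) := by exact_mod_cast hn
  have h := kedlaya_aux x n hx
  calc (1 / (n : ℝ)) * ∑ k ∈ Icc 1 n, (∏ i ∈ Icc 1 k, x i) ^ ((1 : ℝ) / k)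
      ≤ (1 / (n : ℝ)) * ((n : ℝ) * ∏ k ∈ Icc 1 n, ((∑ i ∈ Icc 1 k, x i) / k) ^ ((1 : ℝ) / n)) :=
        mul_le_mul_of_nonneg_left h (by positivity)
    _ = ∏ k ∈ Icc 1 n, ((∑ i ∈ Icc 1 k, x i) / k) ^ ((1 : ℝ) / n) := by
        field_simp
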